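/- Let D ∈ Div(H) be a divisor whose support is contained in V(G) ⊆ V(H). Then: (i) for every function f : V(G) → ℤ, the divisor D + div_ℓ(f) is G-admissible and linearly equivalent to D on H; (ii) every G-admissible divisor D′ on H that is linearly equivalent to D is of the form D + div_ℓ(f) for some f : V(G) → ℤ. -/

import Mathlib

open Finset
open scoped Classical

structure Multigraph (V E : Type) where
  tail : E → V
  head : E → V
  loopless : ∀ e, tail e ≠ head e

namespace Multigraph

variable {V E : Type}

/-- The simple graph of adjacency underlying a multigraph. -/
def adjG (G : Multigraph V E) : SimpleGraph V :=
  SimpleGraph.fromRel (fun u v => ∃ e, G.tail e = u ∧ G.head e = v)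

/-- A multigraph is connected if its adjacency graph is. -/
def Conn (G : Multigraph V E) : Prop := G.adjG.Connected

end Multigraph

variable {V E : Type} [Fintype V] [Fintype E] [DecidableEq V] [DecidableEq E]

/-- The vertex set of the subdivision `H` of `G`: the vertices of `G` together with,
for each edge `e`, the `ℓ e − 1` interior vertices `x_1^e, …, x_{ℓ_e − 1}^e` of the
subdivision of `e` (the pair `⟨e, j⟩` encodes `x_{j+1}^e`, indexed along the reference
orientation of `e`). -/
abbrev VH (V E : Type) (ℓ : E → ℕ) := V ⊕ (Σ e : E, Fin (ℓ e - 1))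

/-- The vertex `x_j^e` of `H` (along the reference orientation of `e`),
for `0 ≤ j ≤ ℓ e`. -/
def xv (G : Multigraph V E) (ℓ : E → ℕ) (e : E) (j : ℕ) : VH V E ℓ :=
  if h : j = 0 then Sum.inl (G.tail e)
  else if h2 : j < ℓ e then Sum.inr ⟨e, ⟨j - 1, by omega⟩⟩
  else Sum.inl (G.head e)

/-- The principal divisor `div(F)` on `H` of a function `F : V(H) → ℤ`; its value at a
vertex `w` is `ord_w(F) = Σ (F(u) − F(w))`, the sum being over the edges of `H` between
`u` and `w`. The edges of `H` are the pairs `{x_j^e, x_{j+1}^e}` for `0 ≤ j < ℓ e`. -/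
def divH (G : Multigraph V E) (ℓ : E → ℕ) (F : VH V E ℓ → ℤ) (w : VH V E ℓ) : ℤ :=
  ∑ e : E, ∑ j ∈ Finset.range (ℓ e),
    ((if xv G ℓ e j = w then F (xv G ℓ e (j + 1)) - F (xv G ℓ e j) else 0) +
     (if xv G ℓ e (j + 1) = w then F (xv G ℓ e j) - F (xv G ℓ e (j + 1)) else 0))

/-- A divisor `D` on `H` is `G`-admissible if, for every edge `e` of `G`, `D` vanishes
at all interior vertices of the subdivision of `e`, except at most one where it
takes the value `1`. -/
def GAdm (G : Multigraph V E) (ℓ : E → ℕ) (D : VH V E ℓ → ℤ) : Prop :=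
  ∀ e : E,
    (∀ j : Fin (ℓ e - 1), D (Sum.inr ⟨e, j⟩) = 0) ∨
    (∃ j : Fin (ℓ e - 1), D (Sum.inr ⟨e, j⟩) = 1 ∧
      ∀ j' : Fin (ℓ e - 1), j' ≠ j → D (Sum.inr ⟨e, j'⟩) = 0)

/-- The principal `G`-admissible divisor `div_ℓ(f)` on `H` associated to
`f : V(G) → ℤ`: at a vertex `u` of `G` its value is `Σ δ_e(f)` over the oriented
edges `e` with tail `u`, where `δ_e(f) = ⌊(f(head e) − f(tail e))/ℓ_e⌋`; for each
oriented edge `e = uv` with `ℓ_e ∤ f(v) − f(u)` it takes the value `1` at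
`x_{r_e}^{ē} = x_{ℓ_e − r_e}^{e}`, where `r_e` is the remainder of the Euclidean
division of `f(v) − f(u)` by `ℓ_e`; and it vanishes at every other vertex. -/
def divell (G : Multigraph V E) (ℓ : E → ℕ) (f : V → ℤ) : VH V E ℓ → ℤ := fun w =>
  match w with
  | Sum.inl u =>
      (∑ e : E, if G.tail e = u then Int.fdiv (f (G.head e) - f (G.tail e)) (ℓ e : ℤ) else 0) +
      (∑ e : E, if G.head e = u then Int.fdiv (f (G.tail e) - f (G.head e)) (ℓ e : ℤ) else 0)
  | Sum.inr p =>
      if Int.fmod (f (G.head p.1) - f (G.tail p.1)) (ℓ p.1 : ℤ) ≠ 0 ∧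
         ((p.2 : ℕ) + 1 : ℤ) + Int.fmod (f (G.head p.1) - f (G.tail p.1)) (ℓ p.1 : ℤ) = (ℓ p.1 : ℤ)
      then 1 else 0
open Finset
open scoped Classical

-- arithmetic helpers
lemma fdivmod_char (L q r : ℤ) (hL : 0 < L) (h0 : 0 ≤ r) (h1 : r < L) :
    Int.fdiv (q * L + r) L = q ∧ Int.fmod (q * L + r) L = r := by
  rw [Int.fdiv_eq_ediv_of_nonneg _ hL.le, Int.fmod_eq_emod_of_nonneg _ hL.le]
  constructor
  · rw [add_comm, Int.add_mul_ediv_right _ _ hL.ne', Int.ediv_eq_zero_of_lt h0 h1, zero_add]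
  · rw [add_comm, Int.add_mul_emod_self_right, Int.emod_eq_of_lt h0 h1]

lemma slope_arith (q r L j : ℤ) (h0 : 0 ≤ r) (h1 : r < L) :
    (q * (j+1) + (if L - r ≤ j+1 then (j+1) - (L-r) else 0)) -
    (q * j + (if L - r ≤ j then j - (L-r) else 0)) = q + (if L - r ≤ j then 1 else 0) := by
  split_ifs with hA hB hB
  · ring
  · have h2 : j + 1 - (L - r) = 0 := by omega
    linear_combination h2
  · exfalso; omega
  · ring

lemma ite_sum_count (i0 M : ℕ) :
    ∑ j ∈ Finset.range M, (if i0 < j then (1:ℤ) else 0) =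
      if i0 + 1 ≤ M then (M:ℤ) - i0 - 1 else 0 := by
  induction M with
  | zero => simp
  | succ n ih =>
    rw [Finset.sum_range_succ, ih]
    split_ifs <;> push_cast <;> omega

lemma edge_key (L : ℕ) (hL : 0 < L) (s : ℕ → ℤ)
    (hadm : (∀ i, i < L - 1 → s (i+1) = s i) ∨
      ∃ i0, i0 < L - 1 ∧ s (i0+1) = s i0 + 1 ∧ ∀ i, i < L - 1 → i ≠ i0 → s (i+1) = s i) :
    Int.fdiv (∑ j ∈ Finset.range L, s j) (L:ℤ) = s 0 ∧
    Int.fdiv (-(∑ j ∈ Finset.range L, s j)) (L:ℤ) = -(s (L-1)) ∧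
    ∀ i, i < L - 1 →
      ((if Int.fmod (∑ j ∈ Finset.range L, s j) (L:ℤ) ≠ 0 ∧
          ((i:ℤ)+1) + Int.fmod (∑ j ∈ Finset.range L, s j) (L:ℤ) = (L:ℤ) then (1:ℤ) else 0)
        = s (i+1) - s i) := by
  have hLZ : (0:ℤ) < (L:ℤ) := by exact_mod_cast hL
  rcases hadm with hconst | ⟨i0, hi0, hjump, hoth⟩
  · have hc : ∀ j, j < L → s j = s 0 := by
      intro j hj
      induction j with
      | zero => rfl
      | succ n ih => rw [hconst n (by omega), ih (by omega)]
    have hsum : ∑ j ∈ Finset.range L, s j = s 0 * (L:ℤ) + 0 := by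
      rw [Finset.sum_congr rfl (fun j hj => hc j (Finset.mem_range.mp hj))]
      simp [mul_comm]
    have h1 := fdivmod_char (L:ℤ) (s 0) 0 hLZ le_rfl hLZ
    have hsum' : -(∑ j ∈ Finset.range L, s j) = (-(s 0)) * (L:ℤ) + 0 := by
      rw [hsum]; ring
    have h2 := fdivmod_char (L:ℤ) (-(s 0)) 0 hLZ le_rfl hLZ
    refine ⟨by rw [hsum]; exact h1.1, by rw [hsum', h2.1, hc (L-1) (by omega)], ?_⟩
    intro i hi
    rw [hsum, h1.2, hconst i hi]
    simp
  · have hc : ∀ j, j < L → s j = if i0 < j then s 0 + 1 else s 0 := by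
      intro j hj
      induction j with
      | zero => simp
      | succ n ih =>
        rcases eq_or_ne n i0 with rfl | hne
        · rw [hjump, ih (by omega)]
          simp
        · rw [hoth n (by omega) hne, ih (by omega)]
          split_ifs <;> first | rfl | omega
    have hr0 : (0:ℤ) ≤ (L:ℤ) - i0 - 1 := by
      have := hi0; push_cast; omega
    have hr1 : (L:ℤ) - i0 - 1 < L := by push_cast; omega
    have hsum : ∑ j ∈ Finset.range L, s j = s 0 * (L:ℤ) + ((L:ℤ) - i0 - 1) := by
      rw [Finset.sum_congr rfl (fun j hj => hc j (Finset.mem_range.mp hj))]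
      have : ∀ j ∈ Finset.range L, (if i0 < j then s 0 + 1 else s 0)
          = s 0 + (if i0 < j then (1:ℤ) else 0) := by
        intro j _; split_ifs <;> ring
      rw [Finset.sum_congr rfl this, Finset.sum_add_distrib, ite_sum_count,
        Finset.sum_const, Finset.card_range, if_pos (by omega)]
      push_cast; ring
    have h1 := fdivmod_char (L:ℤ) (s 0) ((L:ℤ) - i0 - 1) hLZ hr0 hr1
    have hsum' : -(∑ j ∈ Finset.range L, s j) = (-(s 0) - 1) * (L:ℤ) + ((i0:ℤ) + 1) := by
      rw [hsum]; ring
    have h2 := fdivmod_char (L:ℤ) (-(s 0) - 1) ((i0:ℤ)+1) hLZ (by positivity) (by push_cast; omega)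
    refine ⟨by rw [hsum]; exact h1.1, ?_, ?_⟩
    · rw [hsum', h2.1, hc (L-1) (by omega), if_pos (by omega)]
      ring
    · intro i hi
      rw [hsum, h1.2]
      have hsi : s (i+1) - s i = if i = i0 then 1 else 0 := by
        rw [hc (i+1) (by omega), hc i (by omega)]
        split_ifs <;> omega
      rw [hsi]
      split_ifs with h h' h' <;> first | rfl | (exfalso; omega)

section Graph
variable {V E : Type} [Fintype V] [Fintype E] [DecidableEq V] [DecidableEq E]
variable (G : Multigraph V E) (ℓ : E → ℕ)

lemma xv_zero (e : E) : xv G ℓ e 0 = Sum.inl (G.tail e) := by simp [xv]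

lemma xv_top (e : E) (h : 0 < ℓ e) : xv G ℓ e (ℓ e) = Sum.inl (G.head e) := by
  unfold xv; rw [dif_neg (by omega), dif_neg (by omega)]

lemma xv_mid (e : E) (j : ℕ) (h1 : j ≠ 0) (h2 : j < ℓ e) :
    xv G ℓ e j = Sum.inr ⟨e, ⟨j-1, by omega⟩⟩ := by
  unfold xv; rw [dif_neg h1, dif_pos h2]

lemma xv_eq_inr_iff (e e' : E) (i : Fin (ℓ e - 1)) (j : ℕ) :
    xv G ℓ e' j = Sum.inr ⟨e, i⟩ ↔ e' = e ∧ j = (i:ℕ) + 1 := by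
  have hi := i.isLt
  unfold xv
  split_ifs with h0 h2
  · subst h0; simp
  · constructor
    · intro h
      rw [Sum.inr.injEq, Sigma.ext_iff] at h
      obtain ⟨h1, h2⟩ := h
      subst h1
      have := congrArg Fin.val (eq_of_heq h2)
      simp at this
      exact ⟨rfl, by omega⟩
    · rintro ⟨rfl, rfl⟩
      simp [Fin.ext_iff]
  · constructor
    · intro h; exact absurd h (by simp)
    · rintro ⟨rfl, rfl⟩; omega

lemma xv_eq_inl_iff (e : E) (he : 0 < ℓ e) (u : V) (j : ℕ) (hj : j ≤ ℓ e) :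
    xv G ℓ e j = Sum.inl u ↔ (j = 0 ∧ G.tail e = u) ∨ (j = ℓ e ∧ G.head e = u) := by
  unfold xv
  split_ifs with h0 h2
  · subst h0; simp; omega
  · constructor
    · intro h; exact absurd h (by simp)
    · rintro (⟨rfl, _⟩ | ⟨rfl, _⟩) <;> omega
  · have hje : j = ℓ e := by omega
    subst hje
    simp [Sum.inl.injEq]
    omega

lemma divH_inr (F : VH V E ℓ → ℤ) (e : E) (i : Fin (ℓ e - 1)) :
    divH G ℓ F (Sum.inr ⟨e, i⟩) =
      (F (xv G ℓ e ((i:ℕ)+1+1)) - F (xv G ℓ e ((i:ℕ)+1))) +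
      (F (xv G ℓ e (i:ℕ)) - F (xv G ℓ e ((i:ℕ)+1))) := by
  have hi := i.isLt
  unfold divH
  rw [Finset.sum_eq_single e]
  · rw [Finset.sum_add_distrib]
    congr 1
    · rw [Finset.sum_eq_single ((i:ℕ)+1)]
      · rw [if_pos (by rw [xv_eq_inr_iff]; exact ⟨rfl, rfl⟩)]
      · intro b _ hb
        rw [if_neg]
        rw [xv_eq_inr_iff]
        rintro ⟨-, rfl⟩; exact hb rfl
      · intro h
        exact absurd (Finset.mem_range.mpr (by omega)) h
    · rw [Finset.sum_eq_single ((i:ℕ))]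
      · rw [if_pos (by rw [xv_eq_inr_iff]; exact ⟨rfl, rfl⟩)]
      · intro b _ hb
        rw [if_neg]
        rw [xv_eq_inr_iff]
        rintro ⟨-, h⟩; exact hb (by omega)
      · intro h
        exact absurd (Finset.mem_range.mpr (by omega)) h
  · intro e' _ hne
    apply Finset.sum_eq_zero
    intro j _
    rw [if_neg, if_neg, add_zero]
    · rw [xv_eq_inr_iff]; rintro ⟨h, -⟩; exact hne h
    · rw [xv_eq_inr_iff]; rintro ⟨h, -⟩; exact hne h
  · intro h; exact absurd (Finset.mem_univ e) h

lemma divH_inl (hℓ : ∀ e, 0 < ℓ e) (F : VH V E ℓ → ℤ) (u : V) :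
    divH G ℓ F (Sum.inl u) =
      ∑ e : E, ((if G.tail e = u then F (xv G ℓ e 1) - F (xv G ℓ e 0) else 0) +
                (if G.head e = u then F (xv G ℓ e (ℓ e - 1)) - F (xv G ℓ e (ℓ e)) else 0)) := by
  unfold divH
  apply Finset.sum_congr rfl
  intro e _
  rw [Finset.sum_add_distrib]
  congr 1
  · rw [Finset.sum_eq_single 0]
    · rw [xv_zero, zero_add]
      by_cases h : G.tail e = u
      · rw [if_pos (by rw [h]), if_pos h]
      · rw [if_neg (by simp [h]), if_neg h]
    · intro b hb hb0
      rw [if_neg]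
      rw [xv_eq_inl_iff G ℓ e (hℓ e) u b (by simp at hb; omega)]
      simp at hb
      rintro (⟨rfl, _⟩ | ⟨rfl, _⟩) <;> omega
    · intro h
      exact absurd (Finset.mem_range.mpr (hℓ e)) h
  · rw [Finset.sum_eq_single (ℓ e - 1)]
    · have h1 : ℓ e - 1 + 1 = ℓ e := by have := hℓ e; omega
      rw [h1, xv_top G ℓ e (hℓ e)]
      by_cases h : G.head e = u
      · rw [if_pos (by rw [h]), if_pos h]
      · rw [if_neg (by simp [h]), if_neg h]
    · intro b hb hb0
      simp only [Finset.mem_range] at hb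
      rw [if_neg]
      rw [xv_eq_inl_iff G ℓ e (hℓ e) u (b+1) (by omega)]
      rintro (⟨h, _⟩ | ⟨h, _⟩) <;> omega
    · intro h
      exact absurd (Finset.mem_range.mpr (by have := hℓ e; omega)) h

def SlopeOK (G : Multigraph V E) (ℓ : E → ℕ) (F : VH V E ℓ → ℤ) : Prop :=
  ∀ e : E,
    (∀ i, i < ℓ e - 1 →
      F (xv G ℓ e (i+1+1)) - F (xv G ℓ e (i+1)) = F (xv G ℓ e (i+1)) - F (xv G ℓ e i)) ∨
    ∃ i0, i0 < ℓ e - 1 ∧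
      (F (xv G ℓ e (i0+1+1)) - F (xv G ℓ e (i0+1)) = (F (xv G ℓ e (i0+1)) - F (xv G ℓ e i0)) + 1) ∧
      ∀ i, i < ℓ e - 1 → i ≠ i0 →
        F (xv G ℓ e (i+1+1)) - F (xv G ℓ e (i+1)) = F (xv G ℓ e (i+1)) - F (xv G ℓ e i)

lemma divH_eq_divell (hℓ : ∀ e, 0 < ℓ e) (F : VH V E ℓ → ℤ) (hS : SlopeOK G ℓ F)
    (w : VH V E ℓ) : divH G ℓ F w = divell G ℓ (fun u => F (Sum.inl u)) w := by
  have hd : ∀ e : E, ∑ j ∈ Finset.range (ℓ e), (F (xv G ℓ e (j+1)) - F (xv G ℓ e j))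
      = F (Sum.inl (G.head e)) - F (Sum.inl (G.tail e)) := by
    intro e
    rw [Finset.sum_range_sub (fun j => F (xv G ℓ e j)), xv_top G ℓ e (hℓ e), xv_zero]
  have key := fun e : E => edge_key (ℓ e) (hℓ e)
      (fun j => F (xv G ℓ e (j+1)) - F (xv G ℓ e j)) (hS e)
  rcases w with u | ⟨e, i⟩
  · rw [divH_inl G ℓ hℓ F u]
    simp only [divell]
    rw [← Finset.sum_add_distrib]
    apply Finset.sum_congr rfl
    intro e _
    obtain ⟨k1, k2, -⟩ := key e
    congr 1
    · by_cases h : G.tail e = u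
      · rw [if_pos h, if_pos h, ← hd e]
        exact k1.symm
      · rw [if_neg h, if_neg h]
    · by_cases h : G.head e = u
      · rw [if_pos h, if_pos h]
        have hneg : F (Sum.inl (G.tail e)) - F (Sum.inl (G.head e))
            = -(∑ j ∈ Finset.range (ℓ e), (F (xv G ℓ e (j+1)) - F (xv G ℓ e j))) := by
          rw [hd e]; ring
        rw [hneg, k2]
        have hL1 : ℓ e - 1 + 1 = ℓ e := by have := hℓ e; omega
        rw [hL1]
        ring
      · rw [if_neg h, if_neg h]
  · rw [divH_inr G ℓ F e i]
    simp only [divell]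
    obtain ⟨-, -, k3⟩ := key e
    have h3 := k3 (i : ℕ) i.isLt
    rw [hd e] at h3
    rw [h3]
    ring

def Fof (G : Multigraph V E) (ℓ : E → ℕ) (f : V → ℤ) : VH V E ℓ → ℤ := fun w =>
  match w with
  | Sum.inl u => f u
  | Sum.inr p =>
      f (G.tail p.1) + Int.fdiv (f (G.head p.1) - f (G.tail p.1)) (ℓ p.1 : ℤ) * ((p.2 : ℕ) + 1 : ℤ)
        + (if (ℓ p.1 : ℤ) - Int.fmod (f (G.head p.1) - f (G.tail p.1)) (ℓ p.1 : ℤ)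
              ≤ ((p.2 : ℕ) + 1 : ℤ)
           then ((p.2 : ℕ) + 1 : ℤ)
              - ((ℓ p.1 : ℤ) - Int.fmod (f (G.head p.1) - f (G.tail p.1)) (ℓ p.1 : ℤ))
           else 0)

lemma Fof_inl (f : V → ℤ) (u : V) : Fof G ℓ f (Sum.inl u) = f u := rfl

lemma Fof_inr (f : V → ℤ) (p : Σ e : E, Fin (ℓ e - 1)) :
    Fof G ℓ f (Sum.inr p) =
      f (G.tail p.1) + Int.fdiv (f (G.head p.1) - f (G.tail p.1)) (ℓ p.1 : ℤ) * ((p.2 : ℕ) + 1 : ℤ)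
        + (if (ℓ p.1 : ℤ) - Int.fmod (f (G.head p.1) - f (G.tail p.1)) (ℓ p.1 : ℤ)
              ≤ ((p.2 : ℕ) + 1 : ℤ)
           then ((p.2 : ℕ) + 1 : ℤ)
              - ((ℓ p.1 : ℤ) - Int.fmod (f (G.head p.1) - f (G.tail p.1)) (ℓ p.1 : ℤ))
           else 0) := rfl

lemma Fof_xv (hℓ : ∀ e, 0 < ℓ e) (f : V → ℤ) (e : E) (j : ℕ) (hj : j ≤ ℓ e) :
    Fof G ℓ f (xv G ℓ e j) =
      f (G.tail e) + Int.fdiv (f (G.head e) - f (G.tail e)) (ℓ e : ℤ) * (j:ℤ)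
        + (if (ℓ e : ℤ) - Int.fmod (f (G.head e) - f (G.tail e)) (ℓ e : ℤ) ≤ (j:ℤ)
           then (j:ℤ) - ((ℓ e : ℤ) - Int.fmod (f (G.head e) - f (G.tail e)) (ℓ e : ℤ))
           else 0) := by
  have hLZ : (0:ℤ) < (ℓ e : ℤ) := by exact_mod_cast hℓ e
  have hr0 := Int.fmod_nonneg_of_pos (f (G.head e) - f (G.tail e)) hLZ
  have hr1 := Int.fmod_lt_of_pos (f (G.head e) - f (G.tail e)) hLZ
  rcases Nat.eq_zero_or_pos j with rfl | hj0
  · rw [xv_zero, Fof_inl]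
    split_ifs with h
    · exfalso
      omega
    · push_cast
      ring
  · rcases Nat.lt_or_ge j (ℓ e) with hlt | hge
    · rw [xv_mid G ℓ e j (by omega) hlt, Fof_inr]
      have hv : ((⟨j - 1, by omega⟩ : Fin (ℓ e - 1)) : ℕ) = j - 1 := rfl
      simp only [hv]
      have hc : ((j - 1 : ℕ) : ℤ) + 1 = (j : ℤ) := by omega
      rw [hc]
    · have hje : j = ℓ e := by omega
      subst hje
      rw [xv_top G ℓ e (hℓ e), Fof_inl]
      have hdm := Int.mul_fdiv_add_fmod (f (G.head e) - f (G.tail e)) (ℓ e : ℤ)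
      split_ifs with h
      · linear_combination -hdm
      · exfalso
        omega

lemma Fof_slope (hℓ : ∀ e, 0 < ℓ e) (f : V → ℤ) (e : E) (j : ℕ) (hj : j + 1 ≤ ℓ e) :
    Fof G ℓ f (xv G ℓ e (j+1)) - Fof G ℓ f (xv G ℓ e j)
      = Int.fdiv (f (G.head e) - f (G.tail e)) (ℓ e : ℤ)
        + (if (ℓ e : ℤ) - Int.fmod (f (G.head e) - f (G.tail e)) (ℓ e : ℤ) ≤ (j:ℤ)
           then 1 else 0) := by
  have hLZ : (0:ℤ) < (ℓ e : ℤ) := by exact_mod_cast hℓ e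
  rw [Fof_xv G ℓ hℓ f e (j+1) hj, Fof_xv G ℓ hℓ f e j (by omega)]
  have h := slope_arith (Int.fdiv (f (G.head e) - f (G.tail e)) (ℓ e : ℤ))
      (Int.fmod (f (G.head e) - f (G.tail e)) (ℓ e : ℤ)) (ℓ e : ℤ) (j:ℤ)
      (Int.fmod_nonneg_of_pos _ hLZ) (Int.fmod_lt_of_pos _ hLZ)
  push_cast
  linear_combination h

lemma slopeOK_of (L : ℕ) (q r : ℤ) (h0 : 0 ≤ r) (h1 : r < L) (s : ℕ → ℤ)
    (hs : ∀ j, j + 1 ≤ L → s j = q + (if (L:ℤ) - r ≤ (j:ℤ) then 1 else 0)) :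
    (∀ i, i < L - 1 → s (i+1) = s i) ∨
      ∃ i0, i0 < L - 1 ∧ s (i0+1) = s i0 + 1 ∧
        ∀ i, i < L - 1 → i ≠ i0 → s (i+1) = s i := by
  by_cases hr : r = 0
  · left
    intro i hi
    rw [hs (i+1) (by omega), hs i (by omega), hr, if_neg (by omega), if_neg (by omega)]
  · right
    refine ⟨L - 1 - r.toNat, by omega, ?_, ?_⟩
    · rw [hs _ (by omega), hs _ (by omega), if_pos (by omega), if_neg (by omega)]
      ring
    · intro i hi hne
      rw [hs (i+1) (by omega), hs i (by omega)]
      congr 1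
      split_ifs with hA hB <;> first | rfl | (exfalso; omega)

lemma Fof_slopeOK (hℓ : ∀ e, 0 < ℓ e) (f : V → ℤ) : SlopeOK G ℓ (Fof G ℓ f) := by
  intro e
  have hLZ : (0:ℤ) < (ℓ e : ℤ) := by exact_mod_cast hℓ e
  exact slopeOK_of (ℓ e) _ _ (Int.fmod_nonneg_of_pos _ hLZ) (Int.fmod_lt_of_pos _ hLZ)
    (fun j => Fof G ℓ f (xv G ℓ e (j+1)) - Fof G ℓ f (xv G ℓ e j))
    (fun j hj => Fof_slope G ℓ hℓ f e j hj)

end Graph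
theorem stmt0 (G : Multigraph V E) (hG : G.Conn) (ℓ : E → ℕ) (hℓ : ∀ e, 0 < ℓ e)
    (D : VH V E ℓ → ℤ) (hD : ∀ p : Σ e : E, Fin (ℓ e - 1), D (Sum.inr p) = 0) :
    (∀ f : V → ℤ,
      GAdm G ℓ (fun w => D w + divell G ℓ f w) ∧
      ∃ F : VH V E ℓ → ℤ, ∀ w, D w + divell G ℓ f w = D w + divH G ℓ F w) ∧
    (∀ D' : VH V E ℓ → ℤ, GAdm G ℓ D' →
      (∃ F : VH V E ℓ → ℤ, ∀ w, D' w = D w + divH G ℓ F w) →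
      ∃ f : V → ℤ, ∀ w, D' w = D w + divell G ℓ f w) := by
  constructor
  · intro f
    constructor
    · intro e
      have hLZ : (0:ℤ) < (ℓ e : ℤ) := by exact_mod_cast hℓ e
      have hr0 := Int.fmod_nonneg_of_pos (f (G.head e) - f (G.tail e)) hLZ
      have hr1 := Int.fmod_lt_of_pos (f (G.head e) - f (G.tail e)) hLZ
      by_cases hr : Int.fmod (f (G.head e) - f (G.tail e)) (ℓ e : ℤ) = 0
      · left
        intro j
        show D _ + divell G ℓ f _ = 0
        rw [hD ⟨e, j⟩, zero_add]
        show (if _ ∧ _ then (1:ℤ) else 0) = 0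
        rw [if_neg]
        rintro ⟨hc, -⟩
        exact hc hr
      · right
        refine ⟨⟨ℓ e - 1 - (Int.fmod (f (G.head e) - f (G.tail e)) (ℓ e : ℤ)).toNat,
            by omega⟩, ?_, ?_⟩
        · show D _ + divell G ℓ f _ = 1
          rw [hD, zero_add]
          show (if _ ∧ _ then (1:ℤ) else 0) = 1
          rw [if_pos]
          exact ⟨hr, by push_cast; omega⟩
        · intro j' hne
          show D _ + divell G ℓ f _ = 0
          rw [hD, zero_add]
          show (if _ ∧ _ then (1:ℤ) else 0) = 0
          rw [if_neg]
          rintro ⟨-, hc⟩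
          apply hne
          apply Fin.ext
          have hj' := j'.isLt
          have hc' : ((j' : ℕ) : ℤ) + 1
              + Int.fmod (f (G.head e) - f (G.tail e)) (ℓ e : ℤ) = (ℓ e : ℤ) := hc
          show (j' : ℕ) = ℓ e - 1 - (Int.fmod (f (G.head e) - f (G.tail e)) (ℓ e : ℤ)).toNat
          omega
    · refine ⟨Fof G ℓ f, fun w => ?_⟩
      have h := divH_eq_divell G ℓ hℓ (Fof G ℓ f) (Fof_slopeOK G ℓ hℓ f) w
      have hfe : (fun u => Fof G ℓ f (Sum.inl u)) = f := rfl
      rw [hfe] at h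
      rw [← h]
  · intro D' hadm hFex
    obtain ⟨F, hF⟩ := hFex
    refine ⟨fun u => F (Sum.inl u), fun w => ?_⟩
    have hS : SlopeOK G ℓ F := by
      intro e
      have hval : ∀ i (hi : i < ℓ e - 1),
          (F (xv G ℓ e (i+1+1)) - F (xv G ℓ e (i+1))) + (F (xv G ℓ e i) - F (xv G ℓ e (i+1)))
            = D' (Sum.inr ⟨e, ⟨i, hi⟩⟩) := by
        intro i hi
        rw [hF (Sum.inr ⟨e, ⟨i, hi⟩⟩), hD ⟨e, ⟨i, hi⟩⟩, zero_add, divH_inr G ℓ F e ⟨i, hi⟩]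
      rcases hadm e with h | ⟨j0, h1, h2⟩
      · left
        intro i hi
        have := hval i hi
        rw [h ⟨i, hi⟩] at this
        linarith
      · right
        refine ⟨(j0 : ℕ), j0.isLt, ?_, ?_⟩
        · have := hval (j0 : ℕ) j0.isLt
          have hj0 : (⟨(j0 : ℕ), j0.isLt⟩ : Fin (ℓ e - 1)) = j0 := rfl
          rw [hj0, h1] at this
          linarith
        · intro i hi hne
          have := hval i hi
          rw [h2 ⟨i, hi⟩ (by simpa [Fin.ext_iff] using hne)] at this
          linarith
    have h := divH_eq_divell G ℓ hℓ F hS w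
    rw [hF w, h]
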